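/- Let S be a non-degenerate p-simplex with vertices x_0,…,x_p, and let x = Σ γ_i x_i, x' = Σ γ_i' x_i be two points of S written as convex combinations. Then |x - x'| ≥ |γ_0 - γ_0'|·b_0, where b_0 is the distance from x_0 to the affine hyperplane spanned by x_1,…,x_p. -/
import Mathlib


open Set Metric

noncomputable section

abbrev Euc (p : ℕ) := EuclideanSpace ℝ (Fin p)

theorem stmt3 (p : ℕ)
    (x : Fin (p + 1) → Euc p) (hx : AffineIndependent ℝ x)
    (γ γ' : Fin (p + 1) → ℝ)
    (hγ : ∀ i, 0 ≤ γ i) (hγ1 : ∑ i, γ i = 1)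
    (hγ' : ∀ i, 0 ≤ γ' i) (hγ'1 : ∑ i, γ' i = 1) :
    |γ 0 - γ' 0| *
        Metric.infDist (x 0) (affineSpan ℝ (x '' {j | j ≠ 0}) : Set (Euc p)) ≤
      dist (∑ i, γ i • x i) (∑ i, γ' i • x i) := by
  set δ : Fin (p + 1) → ℝ := fun i => γ i - γ' i with hδdef
  have hsum : ∑ i, δ i = 0 := by
    simp [hδdef, Finset.sum_sub_distrib, hγ1, hγ'1]
  have hdiff : (∑ i, γ i • x i) - (∑ i, γ' i • x i) = ∑ i, δ i • x i := by
    rw [← Finset.sum_sub_distrib]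
    simp [hδdef, sub_smul]
  rcases eq_or_ne (δ 0) 0 with h0 | h0
  · have : |γ 0 - γ' 0| = 0 := by
      have : γ 0 - γ' 0 = δ 0 := rfl
      rw [this, h0, abs_zero]
    rw [this, zero_mul]
    exact dist_nonneg
  · set w : Fin (p + 1) → ℝ := fun i => if i = 0 then 0 else -δ i / δ 0 with hwdef
    have hsum' : ∑ i ∈ Finset.univ.filter (· ≠ 0), δ i = -δ 0 := by
      have := Finset.sum_filter_add_sum_filter_not Finset.univ (· ≠ 0) δ
      rw [hsum] at this
      have h2 : ∑ i ∈ Finset.univ.filter (¬ · ≠ 0), δ i = δ 0 := by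
        rw [Finset.sum_filter]
        simp
      linarith
    have hw : ∑ i ∈ Finset.univ.filter (· ≠ 0), w i = 1 := by
      rw [Finset.sum_congr rfl (fun i hi => ?_), ← Finset.sum_div,
        Finset.sum_neg_distrib, hsum', neg_neg, div_self h0]
      · simp only [Finset.mem_filter] at hi
        simp [hwdef, hi.2]
    -- z as an affine combination of the points x j, j ≠ 0
    set s : Finset {j : Fin (p + 1) // j ≠ 0} := Finset.univ with hsdef
    set w' : {j : Fin (p + 1) // j ≠ 0} → ℝ := fun j => w j with hw'def
    have hw'1 : ∑ j ∈ s, w' j = 1 := by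
      rw [← hw]
      exact (Finset.sum_subtype (p := fun j => j ≠ 0) (Finset.univ.filter (· ≠ 0))
        (fun i => by simp) w).symm
    set z : Euc p := s.affineCombination ℝ (fun j : {j : Fin (p + 1) // j ≠ 0} => x j) w' with hzdef
    have hz : z ∈ (affineSpan ℝ (x '' {j | j ≠ 0}) : Set (Euc p)) := by
      have := affineCombination_mem_affineSpan hw'1 (fun j : {j : Fin (p + 1) // j ≠ 0} => x j) (s := s)
      have hrange : Set.range (fun j : {j : Fin (p + 1) // j ≠ 0} => x j) = x '' {j | j ≠ 0} := by
        ext y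
        simp [Set.mem_image]
      rwa [hrange] at this
    have hzsum : z = ∑ i, w i • x i := by
      rw [hzdef, s.affineCombination_eq_linear_combination _ _ hw'1]
      rw [show ∑ i, w i • x i = ∑ i ∈ Finset.univ.filter (· ≠ 0), w i • x i by
        rw [Finset.sum_filter]
        refine Finset.sum_congr rfl fun i _ => ?_
        by_cases hi : i = 0 <;> simp [hi, hwdef]]
      exact (Finset.sum_subtype (p := fun j => j ≠ 0) (Finset.univ.filter (· ≠ 0)) (fun i => by simp) (fun i => w i • x i)).symm
    have key : ∑ i, δ i • x i = δ 0 • (x 0 - z) := by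
      rw [hzsum, smul_sub, Finset.smul_sum]
      rw [show δ 0 • x 0 = ∑ i : Fin (p+1), δ 0 • (if i = 0 then x 0 else 0) by simp]
      rw [← Finset.sum_sub_distrib]
      refine Finset.sum_congr rfl fun i _ => ?_
      by_cases hi : i = 0
      · simp [hi, hwdef]
      · have : δ 0 * (-δ i / δ 0) = -δ i := by rw [mul_comm, div_mul_cancel₀ _ h0]
        simp [hi, hwdef, smul_smul, this]
    calc |γ 0 - γ' 0| *
          Metric.infDist (x 0) (affineSpan ℝ (x '' {j | j ≠ 0}) : Set (Euc p))
        ≤ |δ 0| * dist (x 0) z :=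
          mul_le_mul_of_nonneg_left (Metric.infDist_le_dist_of_mem hz) (abs_nonneg _)
      _ = ‖δ 0 • (x 0 - z)‖ := by
          rw [norm_smul, dist_eq_norm, Real.norm_eq_abs]
      _ = dist (∑ i, γ i • x i) (∑ i, γ' i • x i) := by
          rw [← key, ← hdiff, dist_eq_norm]
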